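/- Let d ≥ 2 and let V be a potential of case A with exponents satisfying c < (3/2)a. Set m := c/(3a) and, for λ ≥ 1, μ := λ^{−m}. For z ∈ ℤ^d and δ ∈ (0, 1/2] let J_{z,δ,μ} := ∏_{j=1}^d ( μ(z_j − 1/2 − δ), μ(z_j + 1/2 + δ) ). Then for every δ ∈ (0, 1/2] and every K > 0 there exists a constant C > 0 such that for all λ ≥ 1: Σ_{z ∈ ℤ^d} μ^d · ( sup_{J_{z,δ,μ}} ( λ − V(x) + K λ^{2m} ) )₊^{d/2} − ∫_{ℝ^d} (λ − V(x))₊^{d/2} dx ≤ C λ^{d/2 + d/a + 2c/(3a) − 1}. -/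

import Mathlib

open MeasureTheory

lemma rpow_add_le_aux {u E M p : ℝ} (hu : 0 ≤ u) (hE : 0 ≤ E) (hM : u + E ≤ M)
    (hp : 1 ≤ p) : (u + E) ^ p ≤ u ^ p + p * M ^ (p - 1) * E := by
  rcases eq_or_lt_of_le hE with h | h
  · simp [← h]
  have hlt : u < u + E := by linarith
  have hderiv : ∀ x ∈ Set.Ioo u (u + E), HasDerivAt (fun t : ℝ => t ^ p)
      (p * x ^ (p - 1)) x := by
    intro x hx
    exact Real.hasDerivAt_rpow_const (Or.inr hp)
  obtain ⟨ξ, hξ, hslope⟩ := exists_hasDerivAt_eq_slope (fun t : ℝ => t ^ p)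
    (fun x => p * x ^ (p - 1)) hlt
    (Real.continuous_rpow_const (by linarith)).continuousOn hderiv
  have hξ0 : 0 ≤ ξ := le_of_lt (lt_of_le_of_lt hu hξ.1)
  have hξM : ξ ≤ M := le_trans (le_of_lt hξ.2) hM
  have hpow : ξ ^ (p - 1) ≤ M ^ (p - 1) :=
    Real.rpow_le_rpow hξ0 hξM (by linarith)
  have hEne : (u + E) - u ≠ 0 := by linarith
  have : (u + E) ^ p - u ^ p = p * ξ ^ (p - 1) * E := by
    field_simp at hslope
    nlinarith [hslope]
  nlinarith [mul_le_mul_of_nonneg_left hpow (le_of_lt (lt_of_lt_of_le zero_lt_one hp)),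
    mul_le_mul_of_nonneg_right (mul_le_mul_of_nonneg_left hpow (by linarith : (0:ℝ) ≤ p)) hE]

variable {d : ℕ}

lemma abs_coord_le_norm (x : EuclideanSpace ℝ (Fin d)) (j : Fin d) : |x j| ≤ ‖x‖ := by
  rw [EuclideanSpace.norm_eq x]
  have h1 : |x j| = Real.sqrt (|x j| ^ 2) := by
    rw [Real.sqrt_sq_eq_abs, abs_abs]
  rw [h1]
  apply Real.sqrt_le_sqrt
  simpa [sq_abs] using Finset.single_le_sum (f := fun i => x i ^ 2)
    (fun i _ => sq_nonneg (x i)) (Finset.mem_univ j)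

lemma norm_le_sqrt_mul {x : EuclideanSpace ℝ (Fin d)} {r : ℝ} (hr : 0 ≤ r)
    (h : ∀ j, |x j| ≤ r) : ‖x‖ ≤ Real.sqrt d * r := by
  rw [EuclideanSpace.norm_eq]
  simp only [Real.norm_eq_abs]
  have : ∑ i, |x i| ^ 2 ≤ (d : ℝ) * r ^ 2 := by
    calc ∑ i, |x i| ^ 2 ≤ ∑ _i : Fin d, r ^ 2 := by
          apply Finset.sum_le_sum
          intro i _
          have := h i
          nlinarith [abs_nonneg (x i)]
      _ = (d : ℝ) * r ^ 2 := by simp [mul_comm]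
  calc Real.sqrt (∑ i, |x i| ^ 2) ≤ Real.sqrt ((d:ℝ) * r ^ 2) := Real.sqrt_le_sqrt this
    _ = Real.sqrt d * r := by
        rw [Real.sqrt_mul (Nat.cast_nonneg d), Real.sqrt_sq hr]

lemma cube_eq_preimage (lo hi : Fin d → ℝ) :
    {x : EuclideanSpace ℝ (Fin d) | ∀ j, lo j ≤ x j ∧ x j < hi j} =
      (MeasurableEquiv.toLp 2 (Fin d → ℝ)).symm ⁻¹'
        (Set.univ.pi fun j => Set.Ico (lo j) (hi j)) := by
  ext x
  simp [Set.mem_pi, MeasurableEquiv.toLp, Set.mem_Ico]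
  exact Iff.rfl

lemma measurableSet_cube (lo hi : Fin d → ℝ) :
    MeasurableSet {x : EuclideanSpace ℝ (Fin d) | ∀ j, lo j ≤ x j ∧ x j < hi j} := by
  rw [cube_eq_preimage]
  exact (MeasurableEquiv.toLp 2 (Fin d → ℝ)).symm.measurable
    (MeasurableSet.univ_pi fun j => measurableSet_Ico)

lemma volume_cube (lo hi : Fin d → ℝ) :
    volume {x : EuclideanSpace ℝ (Fin d) | ∀ j, lo j ≤ x j ∧ x j < hi j} =
      ∏ j, ENNReal.ofReal (hi j - lo j) := by
  rw [cube_eq_preimage,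
    (EuclideanSpace.volume_preserving_symm_measurableEquiv_toLp (Fin d)).measure_preimage
      ((MeasurableSet.univ_pi fun j => measurableSet_Ico).nullMeasurableSet)]
  rw [volume_pi_pi]
  simp [Real.volume_Ico]

/-- Case A potentials: `V ∈ C¹(ℝ^d)` with `C₁|x|^a ≤ V(x) ≤ C₂|x|^b` and
`|∇V(x)| ≤ C₃|x|^c` for positive exponents `a, b, c`. -/
def CaseA {d : ℕ} (V : EuclideanSpace ℝ (Fin d) → ℝ) (a b c : ℝ) : Prop :=
  ContDiff ℝ 1 V ∧ 0 < a ∧ 0 < b ∧ 0 < c ∧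
  ∃ C₁ C₂ C₃ : ℝ, 0 < C₁ ∧ 0 < C₂ ∧ 0 < C₃ ∧
    ∀ x, C₁ * ‖x‖ ^ a ≤ V x ∧ V x ≤ C₂ * ‖x‖ ^ b ∧ ‖gradient V x‖ ≤ C₃ * ‖x‖ ^ c

set_option maxHeartbeats 1600000

/-- Riemann-sum estimate for case A potentials with `c < (3/2)a`: with `m = c/(3a)`,
`μ = λ^{-m}` and overlapping cubes `J_{z,δ,μ}` of side `μ(1+2δ)`, the upper sum
`M_λ = ∑_z μ^d (sup_{J_{z,δ,μ}} (λ - V + Kλ^{2m}))₊^{d/2}` exceeds the Weyl integral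
`W_λ = ∫ (λ - V)₊^{d/2}` by at most `C λ^{d/2 + d/a + 2c/(3a) - 1}`. -/
theorem stmt_10 {d : ℕ} (hd : 2 ≤ d)
    (V : EuclideanSpace ℝ (Fin d) → ℝ) (a b c : ℝ)
    (hV : CaseA V a b c) (hc : c < 3 / 2 * a)
    (δ : ℝ) (hδ0 : 0 < δ) (hδ1 : δ ≤ 1 / 2) (K : ℝ) (hK : 0 < K) :
    ∃ C : ℝ, 0 < C ∧
      ∀ lam : ℝ, 1 ≤ lam →
        (∑' z : Fin d → ℤ,
            (lam ^ (-(c / (3 * a)))) ^ d *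
              max (sSup ((fun x => lam - V x + K * lam ^ (2 * (c / (3 * a)))) ''
                {x : EuclideanSpace ℝ (Fin d) | ∀ j : Fin d,
                  lam ^ (-(c / (3 * a))) * ((z j : ℝ) - 1 / 2 - δ) < x j ∧
                  x j < lam ^ (-(c / (3 * a))) * ((z j : ℝ) + 1 / 2 + δ)})) 0
                ^ ((d : ℝ) / 2))
          - (∫ x, max (lam - V x) 0 ^ ((d : ℝ) / 2))
        ≤ C * lam ^ ((d : ℝ) / 2 + (d : ℝ) / a + 2 * c / (3 * a) - 1) := by
  obtain ⟨hV1, ha, hb, hc0, C₁, C₂, C₃, hC₁, hC₂, hC₃, hVbd⟩ := hV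
  have hd1 : (1:ℝ) ≤ (d:ℝ) / 2 := by
    have : (2:ℝ) ≤ d := by exact_mod_cast hd
    linarith
  set p : ℝ := (d:ℝ) / 2 with hp_def
  have hp0 : 0 < p := by linarith
  set sd : ℝ := Real.sqrt d with hsd_def
  have hsd : 0 < sd := Real.sqrt_pos.2 (by positivity)
  set r₀ : ℝ := ((1 + K) / C₁) ^ (1/a) with hr₀_def
  have hr₀ : 0 < r₀ := Real.rpow_pos_of_pos (by positivity) _
  set c₆ : ℝ := 2 + 7 / r₀ with hc₆_def
  have hc₆ : 0 < c₆ := by positivity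
  set CE : ℝ := K + 2 * sd * C₃ * (sd * c₆ * r₀) ^ c with hCE_def
  have hCE : 0 < CE := by
    have : (0:ℝ) < (sd * c₆ * r₀) ^ c := Real.rpow_pos_of_pos (by positivity) _
    positivity
  refine ⟨(c₆ * r₀) ^ d * (p * (1 + CE) ^ (p - 1) * CE), by
    have : (0:ℝ) < (1 + CE) ^ (p - 1) := Real.rpow_pos_of_pos (by linarith) _
    positivity, ?_⟩
  intro lam hlam
  have hlam0 : (0:ℝ) < lam := by linarith
  set m : ℝ := c / (3 * a) with hm_def
  have hm : 0 < m := by positivity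
  have h2m : 2 * m ≤ 1 := by
    have : m ≤ 1/2 := by
      rw [hm_def, div_le_div_iff₀ (by positivity) (by norm_num)]
      nlinarith
    linarith
  set μ : ℝ := lam ^ (-m) with hμ_def
  have hμ0 : 0 < μ := Real.rpow_pos_of_pos hlam0 _
  have hμ1 : μ ≤ 1 := Real.rpow_le_one_of_one_le_of_nonpos hlam (by linarith)
  have hlam2m : lam ^ (2*m) ≤ lam := by
    nth_rewrite 2 [show lam = lam ^ (1:ℝ) from (Real.rpow_one lam).symm]
    exact Real.rpow_le_rpow_of_exponent_le hlam h2m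
  set R : ℝ := r₀ * lam ^ (1/a) with hR_def
  have hlam1a : (1:ℝ) ≤ lam ^ (1/a) := Real.one_le_rpow hlam (by positivity)
  have hR0 : 0 < R := by positivity
  have hr0R : r₀ ≤ R := by
    nth_rewrite 1 [show r₀ = r₀ * 1 by ring]
    exact mul_le_mul_of_nonneg_left hlam1a (le_of_lt hr₀)
  have hmu_r0R : μ * r₀ ≤ R := by
    rw [hR_def]
    calc μ * r₀ ≤ 1 * lam ^ (1/a) * r₀ := by
          apply mul_le_mul_of_nonneg_right _ hr₀.le
          rw [one_mul]; exact le_trans hμ1 hlam1a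
      _ = r₀ * lam ^ (1/a) := by ring
  set N : ℕ := ⌈R / μ⌉₊ + 2 with hN_def
  have hRμN : R / μ ≤ (N:ℝ) := by
    have := Nat.le_ceil (R / μ)
    push_cast [hN_def]
    linarith
  have hRmuN : R ≤ μ * N := by
    rw [← div_le_iff₀' hμ0]
    exact hRμN
  have hNbd : ((2 * N + 1 : ℕ) : ℝ) * μ ≤ c₆ * R := by
    have h1 : (⌈R / μ⌉₊ : ℝ) < R / μ + 1 := Nat.ceil_lt_add_one (by positivity)
    have h2 : ((2 * N + 1 : ℕ) : ℝ) ≤ 2 * (R / μ) + 7 := by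
      push_cast [hN_def]
      linarith
    have h3 : ((2 * N + 1 : ℕ) : ℝ) * μ ≤ (2 * (R / μ) + 7) * μ :=
      mul_le_mul_of_nonneg_right h2 hμ0.le
    have h4 : (2 * (R / μ) + 7) * μ = 2 * R + 7 * μ := by
      field_simp
    have h5 : 7 * μ ≤ 7 / r₀ * R := by
      rw [div_mul_eq_mul_div, le_div_iff₀ hr₀]
      calc 7 * μ * r₀ = 7 * (μ * r₀) := by ring
        _ ≤ 7 * R := by linarith [hmu_r0R]
        _ = 7 * R := rfl
    calc ((2 * N + 1 : ℕ) : ℝ) * μ ≤ 2 * R + 7 * μ := h4 ▸ h3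
      _ ≤ 2 * R + 7 / r₀ * R := by linarith
      _ = c₆ * R := by rw [hc₆_def]; ring
  have hV0 : ∀ x, 0 ≤ V x := fun x => le_trans (by positivity) (hVbd x).1
  set f : EuclideanSpace ℝ (Fin d) → ℝ := fun x => max (lam - V x) 0 ^ p with hf_def
  have hf0 : ∀ x, 0 ≤ f x := fun x => Real.rpow_nonneg (le_max_right _ _) _
  have hfc : Continuous f := by
    apply Continuous.rpow_const
    · exact (continuous_const.sub hV1.continuous).max continuous_const
    · intro x; right; linarith
  have hfint : Integrable f := by
    apply hfc.integrable_of_hasCompactSupport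
    apply HasCompactSupport.intro (isCompact_closedBall (0 : EuclideanSpace ℝ (Fin d))
      ((lam / C₁) ^ (1/a)))
    intro x hx
    simp only [Metric.mem_closedBall, dist_zero_right, not_le] at hx
    have h2 : lam / C₁ ≤ ‖x‖ ^ a := by
      have h := Real.rpow_le_rpow (Real.rpow_nonneg (by positivity) _) hx.le ha.le
      rwa [← Real.rpow_mul (by positivity), one_div, inv_mul_cancel₀ (ne_of_gt ha),
        Real.rpow_one] at h
    have h1 : lam ≤ V x := by
      have h3 : C₁ * (lam / C₁) ≤ C₁ * ‖x‖ ^ a := mul_le_mul_of_nonneg_left h2 hC₁.le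
      have h4 : C₁ * (lam / C₁) = lam := by field_simp
      linarith [(hVbd x).1]
    have hneg : lam - V x ≤ 0 := by linarith
    show max (lam - V x) 0 ^ p = 0
    rw [max_eq_right hneg, Real.zero_rpow (ne_of_gt hp0)]
  -- key rpow identity : C₁ * R ^ a = (1 + K) * lam
  have hRa : C₁ * R ^ a = (1 + K) * lam := by
    rw [hR_def, Real.mul_rpow hr₀.le (Real.rpow_nonneg hlam0.le _), hr₀_def,
      ← Real.rpow_mul (by positivity), ← Real.rpow_mul hlam0.le,
      one_div, inv_mul_cancel₀ (ne_of_gt ha), Real.rpow_one, Real.rpow_one]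
    field_simp
  set S : Finset (Fin d → ℤ) := Fintype.piFinset (fun _ => Finset.Icc (-(N:ℤ)) (N:ℤ))
    with hS_def
  set Q : (Fin d → ℤ) → Set (EuclideanSpace ℝ (Fin d)) := fun z =>
    {x | ∀ j, μ * ((z j : ℝ) - 1/2) ≤ x j ∧ x j < μ * ((z j : ℝ) + 1/2)} with hQ_def
  set Err : ℝ := p * ((1 + CE) * lam) ^ (p - 1) * (CE * lam ^ (2 * m)) with hErr_def
  have hErr0 : 0 ≤ Err := by
    have h1 : (0:ℝ) ≤ ((1 + CE) * lam) ^ (p - 1) := Real.rpow_nonneg (by positivity) _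
    have h2 : (0:ℝ) ≤ lam ^ (2*m) := Real.rpow_nonneg hlam0.le _
    positivity
  set body : (Fin d → ℤ) → ℝ := fun z =>
    μ ^ d * max (sSup ((fun x => lam - V x + K * lam ^ (2 * m)) ''
      {x : EuclideanSpace ℝ (Fin d) | ∀ j : Fin d,
        μ * ((z j : ℝ) - 1 / 2 - δ) < x j ∧
        x j < μ * ((z j : ℝ) + 1 / 2 + δ)})) 0 ^ p with hbody_def
  have hJne : ∀ z : Fin d → ℤ, ∃ x : EuclideanSpace ℝ (Fin d), ∀ j : Fin d,
      μ * ((z j : ℝ) - 1 / 2 - δ) < x j ∧ x j < μ * ((z j : ℝ) + 1 / 2 + δ) := by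
    intro z
    refine ⟨(WithLp.toLp 2 (fun j => μ * (z j : ℝ)) : EuclideanSpace ℝ (Fin d)), fun j => ⟨?_, ?_⟩⟩
    · apply mul_lt_mul_of_pos_left _ hμ0
      linarith
    · apply mul_lt_mul_of_pos_left _ hμ0
      linarith
  have hzero : ∀ z : Fin d → ℤ, z ∉ S → body z = 0 := by
    intro z hz
    rw [hS_def, Fintype.mem_piFinset] at hz
    push_neg at hz
    obtain ⟨j, hj⟩ := hz
    rw [Finset.mem_Icc] at hj
    push_neg at hj
    have hsup : sSup ((fun x => lam - V x + K * lam ^ (2 * m)) ''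
        {x : EuclideanSpace ℝ (Fin d) | ∀ j : Fin d,
          μ * ((z j : ℝ) - 1 / 2 - δ) < x j ∧
          x j < μ * ((z j : ℝ) + 1 / 2 + δ)}) ≤ 0 := by
      obtain ⟨x₀, hx₀⟩ := hJne z
      have hne : Set.Nonempty {x : EuclideanSpace ℝ (Fin d) | ∀ j : Fin d,
          μ * ((z j : ℝ) - 1 / 2 - δ) < x j ∧ x j < μ * ((z j : ℝ) + 1 / 2 + δ)} := ⟨x₀, hx₀⟩
      apply csSup_le (Set.Nonempty.image _ hne)
      rintro v ⟨x, hx, rfl⟩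
      show lam - V x + K * lam ^ (2 * m) ≤ 0
      have hRx : R ≤ ‖x‖ := by
        by_cases hcase : (N:ℤ) < z j
        · have hzj : (N:ℝ) + 1 ≤ (z j : ℝ) := by exact_mod_cast Int.add_one_le_iff.mpr hcase
          have h1 := (hx j).1
          have h2 : μ * (N:ℝ) ≤ μ * ((z j : ℝ) - 1/2 - δ) := by
            apply mul_le_mul_of_nonneg_left _ hμ0.le
            linarith
          have h3 : R ≤ x j := by
            have := hRmuN
            linarith
          calc R ≤ x j := h3
            _ ≤ |x j| := le_abs_self _
            _ ≤ ‖x‖ := abs_coord_le_norm x j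
        · have hcase2 : z j < -(N:ℤ) := by
            by_contra h
            push_neg at h
            exact hcase (hj h)
          have hzj : (z j : ℝ) ≤ -(N:ℝ) - 1 := by
            have : z j ≤ -(N:ℤ) - 1 := by omega
            exact_mod_cast this
          have h1 := (hx j).2
          have h2 : μ * ((z j : ℝ) + 1/2 + δ) ≤ μ * (-(N:ℝ)) := by
            apply mul_le_mul_of_nonneg_left _ hμ0.le
            linarith
          have h3 : x j ≤ -R := by
            have := hRmuN
            nlinarith
          calc R ≤ -(x j) := by linarith
            _ ≤ |x j| := neg_le_abs _
            _ ≤ ‖x‖ := abs_coord_le_norm x j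
      have hVx : (1 + K) * lam ≤ V x := by
        have h4 : R ^ a ≤ ‖x‖ ^ a := Real.rpow_le_rpow hR0.le hRx ha.le
        have h5 : C₁ * R ^ a ≤ C₁ * ‖x‖ ^ a := mul_le_mul_of_nonneg_left h4 hC₁.le
        rw [hRa] at h5
        linarith [(hVbd x).1]
      have hK2m : K * lam ^ (2*m) ≤ K * lam := mul_le_mul_of_nonneg_left hlam2m hK.le
      linarith
    rw [hbody_def]
    simp only
    rw [max_eq_right hsup, Real.zero_rpow (ne_of_gt hp0), mul_zero]
  have hQmeas : ∀ z, MeasurableSet (Q z) := fun z =>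
    measurableSet_cube (fun j => μ * ((z j : ℝ) - 1/2)) (fun j => μ * ((z j : ℝ) + 1/2))
  have hQvol : ∀ z, volume (Q z) = ENNReal.ofReal (μ ^ d) := by
    intro z
    rw [hQ_def]
    rw [volume_cube (fun j => μ * ((z j : ℝ) - 1/2)) (fun j => μ * ((z j : ℝ) + 1/2))]
    have : ∀ j : Fin d, μ * ((z j : ℝ) + 1/2) - μ * ((z j : ℝ) - 1/2) = μ := by
      intro j; ring
    simp only [this]
    rw [Finset.prod_const, Finset.card_univ, Fintype.card_fin,
      ← ENNReal.ofReal_pow hμ0.le]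
  have key : ∀ z ∈ S, body z ≤ (∫ x in Q z, f x) + μ ^ d * Err := by
    intro z hz
    rw [hS_def, Fintype.mem_piFinset] at hz
    have hzN : ∀ j, -(N:ℝ) ≤ (z j : ℝ) ∧ (z j : ℝ) ≤ (N:ℝ) := by
      intro j
      have h := hz j
      rw [Finset.mem_Icc] at h
      exact ⟨by exact_mod_cast h.1, by exact_mod_cast h.2⟩
    set img : Set ℝ := (fun x => lam - V x + K * lam ^ (2 * m)) ''
      {x : EuclideanSpace ℝ (Fin d) | ∀ j : Fin d,
        μ * ((z j : ℝ) - 1 / 2 - δ) < x j ∧ x j < μ * ((z j : ℝ) + 1 / 2 + δ)} with himg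
    have hbz : body z = μ ^ d * max (sSup img) 0 ^ p := rfl
    set Cz : Set (EuclideanSpace ℝ (Fin d)) :=
      {x | ∀ j : Fin d, μ * ((z j : ℝ) - 1/2 - δ) ≤ x j ∧ x j ≤ μ * ((z j : ℝ) + 1/2 + δ)}
      with hCz_def
    have hQC : Q z ⊆ Cz := by
      intro x hx j
      have h := hx j
      have h1 : μ * ((z j : ℝ) - 1/2 - δ) ≤ μ * ((z j : ℝ) - 1/2) :=
        mul_le_mul_of_nonneg_left (by linarith) hμ0.le
      have h2 : μ * ((z j : ℝ) + 1/2) ≤ μ * ((z j : ℝ) + 1/2 + δ) :=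
        mul_le_mul_of_nonneg_left (by linarith) hμ0.le
      exact ⟨by linarith [h.1], by linarith [h.2]⟩
    have hJC : ∀ y : EuclideanSpace ℝ (Fin d),
        (∀ j : Fin d, μ * ((z j : ℝ) - 1 / 2 - δ) < y j ∧ y j < μ * ((z j : ℝ) + 1 / 2 + δ)) →
        y ∈ Cz := fun y hy j => ⟨(hy j).1.le, (hy j).2.le⟩
    have hCconv : Convex ℝ Cz := by
      intro x hx y hy s t hs ht hst
      intro j
      have hxj := hx j
      have hyj := hy j
      have hco : (s • x + t • y) j = s * x j + t * y j := rfl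
      rw [hco]
      set A : ℝ := μ * ((z j : ℝ) - 1/2 - δ) with hA
      set B : ℝ := μ * ((z j : ℝ) + 1/2 + δ) with hB
      have p1 : s * A ≤ s * x j := mul_le_mul_of_nonneg_left hxj.1 hs
      have p2 : t * A ≤ t * y j := mul_le_mul_of_nonneg_left hyj.1 ht
      have p3 : s * x j ≤ s * B := mul_le_mul_of_nonneg_left hxj.2 hs
      have p4 : t * y j ≤ t * B := mul_le_mul_of_nonneg_left hyj.2 ht
      have qA : s * A + t * A = A := by
        calc s * A + t * A = (s + t) * A := by ring
          _ = A := by rw [hst, one_mul]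
      have qB : s * B + t * B = B := by
        calc s * B + t * B = (s + t) * B := by ring
          _ = B := by rw [hst, one_mul]
      constructor
      · linarith
      · linarith
    have hCnorm : ∀ w ∈ Cz, ‖w‖ ≤ sd * (c₆ * R) := by
      intro w hw
      apply norm_le_sqrt_mul (by positivity)
      intro j
      have h := hw j
      have hzj := hzN j
      have h1 : |w j| ≤ μ * ((N:ℝ) + 1) := by
        rw [abs_le]
        constructor
        · have ha1 : μ * (-(N:ℝ) - 1) ≤ μ * ((z j : ℝ) - 1/2 - δ) :=
            mul_le_mul_of_nonneg_left (by linarith) hμ0.le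
          have ha2 : -(μ * ((N:ℝ) + 1)) = μ * (-(N:ℝ) - 1) := by ring
          linarith [h.1]
        · have ha1 : μ * ((z j : ℝ) + 1/2 + δ) ≤ μ * ((N:ℝ) + 1) :=
            mul_le_mul_of_nonneg_left (by linarith) hμ0.le
          linarith [h.2]
      have h2 : μ * ((N:ℝ) + 1) ≤ c₆ * R := by
        have h3 : μ * ((N:ℝ) + 1) ≤ ((2 * N + 1 : ℕ) : ℝ) * μ := by
          have e : ((2 * N + 1 : ℕ) : ℝ) * μ - μ * ((N:ℝ) + 1) = (N:ℝ) * μ := by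
            push_cast
            ring
          have : (0:ℝ) ≤ (N:ℝ) * μ := mul_nonneg (Nat.cast_nonneg N) hμ0.le
          linarith
        linarith [hNbd]
      linarith
    set L : ℝ := C₃ * (sd * c₆ * r₀) ^ c * lam ^ (1/a*c) with hL_def
    have hL0 : 0 ≤ L := by
      have : (0:ℝ) < (sd * c₆ * r₀) ^ c := Real.rpow_pos_of_pos (by positivity) _
      have : (0:ℝ) < lam ^ (1/a*c) := Real.rpow_pos_of_pos hlam0 _
      positivity
    have hgrad : ∀ w ∈ Cz, ‖fderiv ℝ V w‖ ≤ L := by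
      intro w hw
      have hg : ‖gradient V w‖ = ‖fderiv ℝ V w‖ := LinearIsometryEquiv.norm_map _ _
      have h1 : ‖w‖ ^ c ≤ (sd * (c₆ * R)) ^ c :=
        Real.rpow_le_rpow (norm_nonneg w) (hCnorm w hw) hc0.le
      have h2 : (sd * (c₆ * R)) ^ c = (sd * c₆ * r₀) ^ c * lam ^ (1/a*c) := by
        rw [hR_def, show sd * (c₆ * (r₀ * lam ^ (1/a))) = (sd*c₆*r₀) * lam ^ (1/a) by ring,
          Real.mul_rpow (by positivity) (Real.rpow_nonneg hlam0.le _),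
          ← Real.rpow_mul hlam0.le]
      have h3 := (hVbd w).2.2
      rw [hg] at h3
      calc ‖fderiv ℝ V w‖ ≤ C₃ * ‖w‖ ^ c := h3
        _ ≤ C₃ * ((sd * c₆ * r₀) ^ c * lam ^ (1/a*c)) := by
            rw [← h2]
            exact mul_le_mul_of_nonneg_left h1 hC₃.le
        _ = L := by rw [hL_def]; ring
    have hLsd : L * (sd * (2 * μ)) = (CE - K) * lam ^ (2*m) := by
      have hmm : lam ^ (1/a*c) * lam ^ (-m) = lam ^ (2*m) := by
        rw [← Real.rpow_add hlam0]
        congr 1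
        rw [hm_def]
        field_simp
        ring
      calc L * (sd * (2 * μ)) =
          (2 * sd * C₃ * (sd * c₆ * r₀) ^ c) * (lam ^ (1/a*c) * lam ^ (-m)) := by
            rw [hL_def, hμ_def]; ring
        _ = (CE - K) * lam ^ (2*m) := by rw [hmm, hCE_def]; ring
    have hMVT : ∀ x ∈ Q z, ∀ y : EuclideanSpace ℝ (Fin d),
        (∀ j : Fin d, μ * ((z j : ℝ) - 1 / 2 - δ) < y j ∧ y j < μ * ((z j : ℝ) + 1 / 2 + δ)) →
        V x - V y ≤ (CE - K) * lam ^ (2*m) := by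
      intro x hx y hy
      have hxC := hQC hx
      have hyC := hJC y hy
      have hdiff : ∀ w ∈ Cz, DifferentiableAt ℝ V w :=
        fun w _ => (hV1.differentiable one_ne_zero) w
      have h1 : ‖V x - V y‖ ≤ L * ‖x - y‖ :=
        hCconv.norm_image_sub_le_of_norm_fderiv_le hdiff hgrad hyC hxC
      have h2 : ‖x - y‖ ≤ sd * (2 * μ) := by
        apply norm_le_sqrt_mul (by positivity)
        intro j
        have hxj := hx j
        have hyj := hy j
        have hsub : (x - y) j = x j - y j := rfl
        rw [hsub, abs_le]
        have hμδ : μ * δ ≤ μ * (1/2) := mul_le_mul_of_nonneg_left hδ1 hμ0.le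
        have e1 : μ * ((z j : ℝ) - 1/2) = μ * (z j : ℝ) - μ * (1/2) := by ring
        have e2 : μ * ((z j : ℝ) + 1/2) = μ * (z j : ℝ) + μ * (1/2) := by ring
        have e3 : μ * ((z j : ℝ) - 1/2 - δ) = μ * (z j : ℝ) - μ * (1/2) - μ * δ := by ring
        have e4 : μ * ((z j : ℝ) + 1/2 + δ) = μ * (z j : ℝ) + μ * (1/2) + μ * δ := by ring
        constructor
        · linarith [hxj.1, hyj.2]
        · linarith [hxj.2, hyj.1]
      calc V x - V y ≤ ‖V x - V y‖ := le_abs_self _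
        _ ≤ L * ‖x - y‖ := h1
        _ ≤ L * (sd * (2 * μ)) := mul_le_mul_of_nonneg_left h2 hL0
        _ = (CE - K) * lam ^ (2*m) := hLsd
    have hpt : ∀ x ∈ Q z, max (sSup img) 0 ^ p ≤ f x + Err := by
      intro x hx
      have hE0 : 0 ≤ CE * lam ^ (2*m) :=
        mul_nonneg hCE.le (Real.rpow_nonneg hlam0.le _)
      have hsup : sSup img ≤ (lam - V x) + CE * lam ^ (2*m) := by
        obtain ⟨x₀, hx₀⟩ := hJne z
        have hne : Set.Nonempty {x : EuclideanSpace ℝ (Fin d) | ∀ j : Fin d,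
            μ * ((z j : ℝ) - 1 / 2 - δ) < x j ∧ x j < μ * ((z j : ℝ) + 1 / 2 + δ)} := ⟨x₀, hx₀⟩
        apply csSup_le (Set.Nonempty.image _ hne)
        rintro v ⟨y, hy, rfl⟩
        show lam - V y + K * lam ^ (2 * m) ≤ _
        have hm1 := hMVT x hx y hy
        linarith
      have h7 : max (sSup img) 0 ≤ max (lam - V x) 0 + CE * lam ^ (2*m) :=
        max_le (le_trans hsup (add_le_add_left (le_max_left _ _) _))
          (add_nonneg (le_max_right _ _) hE0)
      have hu : max (lam - V x) 0 ≤ lam := max_le (by linarith [hV0 x]) hlam0.le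
      have hsum : max (lam - V x) 0 + CE * lam ^ (2*m) ≤ (1 + CE) * lam := by
        have : CE * lam ^ (2*m) ≤ CE * lam := mul_le_mul_of_nonneg_left hlam2m hCE.le
        linarith
      calc max (sSup img) 0 ^ p ≤ (max (lam - V x) 0 + CE * lam ^ (2*m)) ^ p :=
          Real.rpow_le_rpow (le_max_right _ _) h7 hp0.le
        _ ≤ max (lam - V x) 0 ^ p + p * ((1 + CE) * lam) ^ (p - 1) * (CE * lam ^ (2*m)) :=
          rpow_add_le_aux (le_max_right _ _) hE0 hsum hd1
        _ = f x + Err := by rw [hf_def, hErr_def]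
    have hvol := hQvol z
    have hQfin : volume (Q z) < ⊤ := by rw [hvol]; exact ENNReal.ofReal_lt_top
    have hconst_int : ∀ cc : ℝ, IntegrableOn (fun _ => cc) (Q z) volume :=
      fun cc => integrableOn_const hQfin.ne
    have htoReal : (volume (Q z)).toReal = μ ^ d := by
      rw [hvol, ENNReal.toReal_ofReal (by positivity)]
    rw [hbz]
    calc μ ^ d * max (sSup img) 0 ^ p
        = ∫ _x in Q z, max (sSup img) 0 ^ p := by
          rw [setIntegral_const, measureReal_def, htoReal, smul_eq_mul]
      _ ≤ ∫ x in Q z, (f x + Err) := by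
          apply setIntegral_mono_on (hconst_int _)
            (hfint.integrableOn.add (hconst_int _)) (hQmeas z)
          exact hpt
      _ = (∫ x in Q z, f x) + ∫ _x in Q z, Err :=
          integral_add hfint.integrableOn (hconst_int _)
      _ = (∫ x in Q z, f x) + μ ^ d * Err := by
          rw [setIntegral_const, measureReal_def, htoReal, smul_eq_mul]
  have hdisj : (↑S : Set (Fin d → ℤ)).PairwiseDisjoint Q := by
    intro z _ w _ hzw
    rw [Function.onFun, Set.disjoint_left]
    intro x hxz hxw
    apply hzw
    funext j
    have h1 := hxz j
    have h2 := hxw j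
    by_contra hne
    rcases lt_or_gt_of_ne hne with h | h
    · have : (z j : ℝ) + 1 ≤ (w j : ℝ) := by exact_mod_cast Int.add_one_le_iff.mpr h
      have := mul_le_mul_of_nonneg_left (by linarith : (z j : ℝ) + 1/2 ≤ (w j : ℝ) - 1/2) hμ0.le
      linarith [h1.2, h2.1]
    · have : (w j : ℝ) + 1 ≤ (z j : ℝ) := by exact_mod_cast Int.add_one_le_iff.mpr h
      have := mul_le_mul_of_nonneg_left (by linarith : (w j : ℝ) + 1/2 ≤ (z j : ℝ) - 1/2) hμ0.le
      linarith [h1.1, h2.2]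
  have hsum_int : ∑ z ∈ S, (∫ x in Q z, f x) ≤ ∫ x, f x := by
    rw [← MeasureTheory.integral_biUnion_finset S (fun z _ => hQmeas z) hdisj
      (fun z _ => hfint.integrableOn)]
    exact setIntegral_le_integral hfint (ae_of_all _ hf0)
  have hcard : (S.card : ℝ) * μ ^ d ≤ (c₆ * R) ^ d := by
    have h1 : S.card = (2 * N + 1) ^ d := by
      rw [hS_def, Fintype.card_piFinset]
      have : (Finset.Icc (-(N:ℤ)) (N:ℤ)).card = 2 * N + 1 := by
        rw [Int.card_Icc]
        omega
      simp [this]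
    rw [h1, Nat.cast_pow, ← mul_pow]
    exact pow_le_pow_left₀ (by positivity) hNbd d
  -- final assembly
  rw [tsum_eq_sum hzero]
  have h1 : ∑ z ∈ S, body z ≤ ∑ z ∈ S, ((∫ x in Q z, f x) + μ ^ d * Err) :=
    Finset.sum_le_sum key
  rw [Finset.sum_add_distrib, Finset.sum_const, nsmul_eq_mul] at h1
  have h2 : ∑ z ∈ S, body z - (∫ x, f x) ≤ (S.card : ℝ) * (μ ^ d * Err) := by
    linarith [hsum_int]
  refine le_trans h2 ?_
  have h3 : (S.card : ℝ) * (μ ^ d * Err) ≤ (c₆ * R) ^ d * Err := by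
    rw [← mul_assoc]
    exact mul_le_mul_of_nonneg_right hcard hErr0
  refine le_trans h3 ?_
  apply le_of_eq
  have hE1 : ((1 + CE) * lam) ^ (p - 1) = (1+CE)^(p-1) * lam^(p-1) :=
    Real.mul_rpow (by positivity) hlam0.le
  have hE2 : (c₆ * R)^d = (c₆ * r₀)^d * lam ^ ((1/a)*(d:ℝ)) := by
    rw [hR_def, show c₆ * (r₀ * lam ^ (1/a)) = c₆ * r₀ * lam ^ (1/a) by ring, mul_pow,
      ← Real.rpow_natCast (lam ^ (1/a)) d, ← Real.rpow_mul hlam0.le]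
  have hE3 : lam ^ ((1/a)*(d:ℝ)) * lam ^ (p-1) * lam ^ (2*m) =
      lam ^ (p + (d:ℝ)/a + 2*c/(3*a) - 1) := by
    rw [← Real.rpow_add hlam0, ← Real.rpow_add hlam0]
    congr 1
    rw [hm_def, hp_def]
    field_simp
    ring
  rw [hErr_def, hE2, hE1]
  calc (c₆*r₀)^d * lam ^ ((1/a)*(d:ℝ)) * (p * ((1+CE)^(p-1) * lam^(p-1)) * (CE * lam^(2*m)))
      = (c₆*r₀)^d * (p * (1+CE)^(p-1) * CE) *
          (lam ^ ((1/a)*(d:ℝ)) * lam ^ (p-1) * lam ^ (2*m)) := by ring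
    _ = (c₆*r₀)^d * (p * (1+CE)^(p-1) * CE) * lam ^ (p + (d:ℝ)/a + 2*c/(3*a) - 1) := by
        rw [hE3]
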